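/- Let (G, T) be a Steiner Orientation instance with G = (V, E, A) mixed acyclic, and suppose T contains pairs (s_1,t_1), …, (s_m,t_m) with m ≥ 2, t_i = s_{i+1} for all 1 ≤ i < m, and t_m = s_1. Then (G, T) is a no-instance of Steiner Orientation. -/

import Mathlib

/-- A mixed graph `G = (V, E, A)`: a simple graph `E` of undirected edges together
with a set `A` of arcs (ordered pairs of distinct vertices). -/
structure MixedGraph (V : Type*) where
  E : SimpleGraph V
  A : V → V → Prop
  A_irrefl : ∀ v : V, ¬ A v v

namespace MixedGraph

variable {V : Type*}

/-- The underlying simple graph of a mixed graph. -/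
def underlying (G : MixedGraph V) : SimpleGraph V where
  Adj u v := G.E.Adj u v ∨ G.A u v ∨ G.A v u
  symm := by
    refine ⟨?_⟩
    intro u v h
    rcases h with h | h | h
    · exact Or.inl h.symm
    · exact Or.inr (Or.inr h)
    · exact Or.inr (Or.inl h)
  loopless := by
    refine ⟨?_⟩
    intro v h
    rcases h with h | h | h
    · exact G.E.ne_of_adj h rfl
    · exact G.A_irrefl v h
    · exact G.A_irrefl v h

/-- `G` contains a mixed cycle: a cyclic sequence of `p ≥ 2` pairwise distinct
vertices in which each consecutive pair (cyclically) is an undirected edge of `E`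
or an arc of `A`, and no edge of `E` is used by two different consecutive pairs.
(`useE i = true` means the `i`-th consecutive pair uses an edge of `E`.) -/
def HasMixedCycle (G : MixedGraph V) : Prop :=
  ∃ (p : ℕ) (c : Fin (p + 2) → V) (useE : Fin (p + 2) → Bool),
    Function.Injective c ∧
    (∀ i : Fin (p + 2),
      (useE i = true → G.E.Adj (c i) (c (i + 1))) ∧
      (useE i = false → G.A (c i) (c (i + 1)))) ∧
    (∀ i j : Fin (p + 2), i ≠ j → useE i = true → useE j = true →
      s(c i, c (i + 1)) ≠ s(c j, c (j + 1)))

/-- A mixed graph is mixed acyclic if it has no mixed cycle. -/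
def MixedAcyclic (G : MixedGraph V) : Prop := ¬ G.HasMixedCycle

/-- An orientation of the undirected edges of a mixed graph: each edge
`{u,v} ∈ E` is assigned exactly one of the two directions `(u,v)`, `(v,u)`. -/
structure Orientation (G : MixedGraph V) where
  dir : V → V → Prop
  dir_adj : ∀ u v : V, dir u v → G.E.Adj u v
  total : ∀ u v : V, G.E.Adj u v → dir u v ∨ dir v u
  antisymm : ∀ u v : V, dir u v → ¬ dir v u

/-- The arc relation of the digraph `G_λ`: the original arcs together with the
chosen orientations of the undirected edges. -/
def Orientation.arc {G : MixedGraph V} (lam : Orientation G) (u v : V) : Prop :=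
  G.A u v ∨ lam.dir u v

/-- The orientation `lam` satisfies the set `T` of terminal pairs if `G_λ`
contains a directed path from `s` to `t` for every `(s, t) ∈ T`. -/
def Orientation.Satisfies {G : MixedGraph V} (lam : Orientation G)
    (T : Set (V × V)) : Prop :=
  ∀ p ∈ T, Relation.ReflTransGen lam.arc p.1 p.2

/-- `(G, T)` is a yes-instance of Steiner Orientation: some orientation of the
undirected edges satisfies all terminal pairs. -/
def YesInstance (G : MixedGraph V) (T : Set (V × V)) : Prop :=
  ∃ lam : Orientation G, lam.Satisfies T

/-- The number of arcs of `G` having `v` as head or as tail. -/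
noncomputable def degA (G : MixedGraph V) (v : V) : ℕ :=
  {p : V × V | G.A p.1 p.2 ∧ (p.1 = v ∨ p.2 = v)}.ncard

end MixedGraph


/-- From any periodic closed `r`-walk, with `r` irreflexive, extract an injective
cyclic sequence all of whose consecutive pairs satisfy `r`. -/
lemma exists_injective_cycle {V : Type*} {r : V → V → Prop}
    (hirr : ∀ v, ¬ r v v)
    (h : ∃ n, 0 < n ∧ ∃ g : ℕ → V, (∀ i, g (i + n) = g i) ∧ (∀ i, r (g i) (g (i + 1)))) :
    ∃ (p : ℕ) (c : Fin (p + 2) → V), Function.Injective c ∧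
      ∀ i : Fin (p + 2), r (c i) (c (i + 1)) := by
  classical
  set P : ℕ → Prop := fun n =>
    0 < n ∧ ∃ g : ℕ → V, (∀ i, g (i + n) = g i) ∧ (∀ i, r (g i) (g (i + 1))) with hP
  obtain ⟨n, hn, hmin⟩ : ∃ n, P n ∧ ∀ m < n, ¬ P m :=
    ⟨Nat.find h, Nat.find_spec h, fun m hm => Nat.find_min h hm⟩
  obtain ⟨hn0, g, hper, hstep⟩ := hn
  have hmod : ∀ k, g k = g (k % n) := by
    intro k
    conv_lhs => rw [← Nat.mod_add_div k n]
    generalize k / n = q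
    induction q with
    | zero => simp
    | succ q ih =>
      have e : k % n + n * (q + 1) = (k % n + n * q) + n := by ring
      rw [e, hper, ih]
  have hginj : ∀ a b, a < b → b < n → g a ≠ g b := by
    intro a b hab hbn heq
    set d := b - a with hd
    have hd0 : 0 < d := by omega
    refine hmin d (by omega) ⟨hd0, fun i => g (a + i % d), ?_, ?_⟩
    · intro i
      show g (a + (i + d) % d) = g (a + i % d)
      rw [Nat.add_mod_right]
    · intro i
      show r (g (a + i % d)) (g (a + (i + 1) % d))
      rcases Nat.lt_or_ge (i % d + 1) d with hlt | hge
      · have e : (i + 1) % d = i % d + 1 := by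
          have h1 : (1 : ℕ) % d = 1 := Nat.mod_eq_of_lt (by omega)
          rw [Nat.add_mod, h1, Nat.mod_eq_of_lt hlt]
        rw [e, ← Nat.add_assoc]
        exact hstep _
      · have e1 : i % d = d - 1 := by
          have := Nat.mod_lt i hd0
          omega
        have e2 : (i + 1) % d = 0 := by
          have h3 := Nat.div_add_mod i d
          have e : i + 1 = d * (i / d + 1) := by
            rw [Nat.mul_add, Nat.mul_one]
            omega
          rw [e, Nat.mul_mod_right]
        have e3 : a + i % d = b - 1 := by omega
        rw [e2, e3, Nat.add_zero, heq]
        have hb := hstep (b - 1)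
        rwa [Nat.sub_add_cancel (by omega)] at hb
  have hn2 : 2 ≤ n := by
    by_contra hcon
    have hn1 : n = 1 := by omega
    have h1 : g 1 = g 0 := by
      have := hper 0
      rwa [Nat.zero_add, hn1] at this
    have := hstep 0
    rw [Nat.zero_add, h1] at this
    exact hirr _ this
  obtain ⟨p, rfl⟩ : ∃ p, n = p + 2 := ⟨n - 2, by omega⟩
  refine ⟨p, fun i => g i.val, ?_, ?_⟩
  · intro i j hij
    by_contra hne
    have hne' : i.val ≠ j.val := fun h => hne (Fin.ext h)
    rcases Nat.lt_or_ge i.val j.val with h | h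
    · exact hginj _ _ h j.isLt hij
    · exact hginj _ _ (by omega) i.isLt hij.symm
  · intro i
    show r (g i.val) (g ((i + 1 : Fin (p + 2)).val))
    have e : ((i + 1 : Fin (p + 2))).val = (i.val + 1) % (p + 2) := by
      simp [Fin.add_def]
    rw [e, ← hmod]
    exact hstep i.val

/-- If `G` is mixed acyclic and `T` contains pairs
`(s_1,t_1), …, (s_m,t_m)` with `m ≥ 2`, `t_i = s_{i+1}` cyclically, then
`(G, T)` is a no-instance of Steiner Orientation. (Here `m` is encoded as
`m₀ + 2` to express `m ≥ 2`.) -/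
theorem steinerOrientation_stmt2 {V : Type*} [Fintype V] (G : MixedGraph V)
    (hG : G.MixedAcyclic) (T : Set (V × V)) (hT : ∀ p ∈ T, p.1 ≠ p.2)
    (m₀ : ℕ) (f : Fin (m₀ + 2) → V × V)
    (hf : ∀ i, f i ∈ T)
    (hcyc : ∀ i : Fin (m₀ + 2), (f i).2 = (f (i + 1)).1) :
    ¬ G.YesInstance T := by
  rintro ⟨lam, hsat⟩
  classical
  set r := lam.arc with hr
  have hirr : ∀ v, ¬ r v v := by
    intro v hv
    rcases hv with h | h
    · exact G.A_irrefl v h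
    · exact G.E.ne_of_adj (lam.dir_adj v v h) rfl
  -- each terminal pair gives a nontrivial directed path
  have htg : ∀ i : Fin (m₀ + 2), Relation.TransGen r (f i).1 (f i).2 := by
    intro i
    rcases Relation.reflTransGen_iff_eq_or_transGen.mp (hsat (f i) (hf i)) with h | h
    · exact absurd h.symm (hT (f i) (hf i))
    · exact h
  -- compose them around the cycle of terminals
  open Fin.NatCast in
  have hchain : ∀ k : ℕ, Relation.TransGen r (f 0).1 (f (k : Fin (m₀ + 2))).2 := by
    intro k
    induction k with
    | zero => simpa using htg 0
    | succ nn ih =>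
      have e : ((nn + 1 : ℕ) : Fin (m₀ + 2)) = (nn : Fin (m₀ + 2)) + 1 := by
        push_cast
        ring
      rw [e]
      have h2 := htg ((nn : Fin (m₀ + 2)) + 1)
      rw [← hcyc (nn : Fin (m₀ + 2))] at h2
      exact ih.trans h2
  open Fin.NatCast in
  have hss : Relation.TransGen r (f 0).1 (f 0).1 := by
    have h := hchain (m₀ + 1)
    have h2 := hcyc ((m₀ + 1 : ℕ) : Fin (m₀ + 2))
    have e : ((m₀ + 1 : ℕ) : Fin (m₀ + 2)) + 1 = 0 := by
      have e1 : (m₀ + 1) % (m₀ + 2) = m₀ + 1 := Nat.mod_eq_of_lt (by omega)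
      have e2 : (m₀ + 1 + 1) % (m₀ + 2) = 0 := by
        rw [show m₀ + 1 + 1 = m₀ + 2 from rfl]
        exact Nat.mod_self _
      apply Fin.ext
      rw [Fin.val_add, Fin.val_natCast, Fin.val_one, Fin.val_zero, e1, e2]
    rw [e] at h2
    rwa [h2] at h
  -- turn the closed directed walk into a periodic function
  have hexists : ∃ n, 0 < n ∧ ∃ g : ℕ → V,
      (∀ i, g (i + n) = g i) ∧ (∀ i, r (g i) (g (i + 1))) := by
    obtain ⟨x, hsx, hxs⟩ := Relation.TransGen.head'_iff.mp hss
    obtain ⟨l0, hl0, hlast0⟩ := List.exists_isChain_cons_of_relationReflTransGen hxs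
    -- the closed walk as a total function on ℕ
    obtain ⟨u, hu⟩ : ∃ u : ℕ → V, u = fun i => ((f 0).1 :: x :: l0).getD i (f 0).1 :=
      ⟨_, rfl⟩
    obtain ⟨n, hn⟩ : ∃ n, n = l0.length + 1 := ⟨_, rfl⟩
    have hn0 : 0 < n := by omega
    have hlen : ((f 0).1 :: x :: l0).length = n + 1 := by
      simp [hn]
    have hstepu : ∀ i, i < n → r (u i) (u (i + 1)) := by
      intro i hi
      have hc : List.IsChain r ((f 0).1 :: x :: l0) := List.isChain_cons_cons.mpr ⟨hsx, hl0⟩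
      have h2 := List.isChain_iff_getElem.mp hc i (by omega)
      rw [hu]
      simp only []
      rw [List.getD_eq_getElem _ _ (by omega), List.getD_eq_getElem _ _ (by omega)]
      simpa [List.get_eq_getElem] using h2
    have hlastu : u n = u 0 := by
      rw [hu]
      simp only []
      rw [List.getD_eq_getElem _ _ (by omega), List.getD_eq_getElem _ _ (by omega)]
      have h2 : (x :: l0).getLast (List.cons_ne_nil _ _) = (x :: l0)[l0.length]'(by simp) := by
        rw [List.getLast_eq_getElem]
        simp
      have h3 : ((f 0).1 :: x :: l0)[n]'(by omega) = (x :: l0)[l0.length]'(by simp) := by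
        have : n = l0.length + 1 := hn
        simp only [this, List.getElem_cons_succ]
      rw [h3, ← h2, hlast0]
      simp
    -- the periodic extension
    refine ⟨n, hn0, fun i => u (i % n), ?_, ?_⟩
    · intro i
      show u ((i + n) % n) = u (i % n)
      rw [Nat.add_mod_right]
    · intro i
      show r (u (i % n)) (u ((i + 1) % n))
      have hj : i % n < n := Nat.mod_lt i hn0
      rcases Nat.lt_or_ge (i % n + 1) n with hlt | hge
      · have e : (i + 1) % n = i % n + 1 := by
          have h1 : (1 : ℕ) % n = 1 := Nat.mod_eq_of_lt (by omega)
          rw [Nat.add_mod, h1, Nat.mod_eq_of_lt hlt]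
        rw [e]
        exact hstepu _ hj
      · have e1 : i % n = n - 1 := by omega
        have e2 : (i + 1) % n = 0 := by
          have h3 := Nat.div_add_mod i n
          have e : i + 1 = n * (i / n + 1) := by
            rw [Nat.mul_add, Nat.mul_one]
            omega
          rw [e, Nat.mul_mod_right]
        rw [e2, ← hlastu]
        have := hstepu (i % n) hj
        rwa [e1, Nat.sub_add_cancel (by omega), ← e1] at this
  -- extract an injective directed cycle
  obtain ⟨p, c, hcinj, hcstep⟩ := exists_injective_cycle hirr hexists
  -- build a mixed cycle, contradicting acyclicity
  apply hG
  refine ⟨p, c, fun i => if G.A (c i) (c (i + 1)) then false else true, hcinj, ?_, ?_⟩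
  · intro i
    constructor
    · intro hi
      have hA : ¬ G.A (c i) (c (i + 1)) := by
        intro hA
        simp [hA] at hi
      rcases hcstep i with h | h
      · exact absurd h hA
      · exact lam.dir_adj _ _ h
    · intro hi
      by_contra hA
      simp [hA] at hi
  · intro i j hij hi hj
    have hAi : ¬ G.A (c i) (c (i + 1)) := by
      intro hA
      simp [hA] at hi
    have hAj : ¬ G.A (c j) (c (j + 1)) := by
      intro hA
      simp [hA] at hj
    have hdi : lam.dir (c i) (c (i + 1)) := (hcstep i).resolve_left hAi
    have hdj : lam.dir (c j) (c (j + 1)) := (hcstep j).resolve_left hAj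
    intro heq
    rw [Sym2.eq, Sym2.rel_iff'] at heq
    simp only [Prod.swap_prod_mk, Prod.mk.injEq] at heq
    rcases heq with ⟨h1, h2⟩ | ⟨h1, h2⟩
    · exact hij (hcinj h1)
    · rw [← h2, ← h1] at hdj
      exact lam.antisymm _ _ hdi hdj
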